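/- Let (W,S) be a Coxeter system with Coxeter matrix m and let T ⊆ S be such that for every t ∈ T and s ∈ S∖T the exponent m_{st} is even or ∞. For t ∈ T set A_t = {s ∈ S∖T : m_{st} = 2}. Let t_1, t_2 ∈ T and w_1, w_2 ∈ W_{S∖T}. Then w_1 t_1 w_1⁻¹ = w_2 t_2 w_2⁻¹ if and only if t_1 = t_2 and w_1⁻¹w_2 ∈ W_{A_{t_1}} · W_{A_{t_2}} (the product set of the two standard parabolic subgroups). -/

import Mathlib

open Real CoxeterSystem

namespace EvenCox

variable {B : Type*} (M : CoxeterMatrix B)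

noncomputable def al (i : B) : B →₀ ℝ := Finsupp.single i 1

noncomputable def ph (i : B) : (B →₀ ℝ) →ₗ[ℝ] ℝ :=
  Finsupp.linearCombination ℝ (fun j => -Real.cos (π / M i j))

noncomputable def sg (i : B) : Module.End ℝ (B →₀ ℝ) :=
  LinearMap.id - (2:ℝ) • ((ph M i).smulRight (al i))

lemma sg_apply (i : B) (v : B →₀ ℝ) : sg M i v = v - (2 * ph M i v) • al i := by
  simp [sg, mul_smul]

lemma ph_al (i j : B) : ph M i (al j) = -Real.cos (π / M i j) := by
  simp [ph, al]

lemma ph_al_self (i : B) : ph M i (al i) = 1 := by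
  rw [ph_al, M.diagonal]; simp

lemma sg_al_self (i : B) : sg M i (al i) = -al i := by
  rw [sg_apply, ph_al_self]; module

lemma sg_al (i j : B) : sg M i (al j) = al j + (2 * Real.cos (π / M i j)) • al i := by
  rw [sg_apply, ph_al]; module

section Dihedral

variable {i j : B} {m : ℕ}

local notation "θ" => π / (m:ℝ)
local notation "γ" => Real.cos (π / (m:ℝ))
local notation "sθ" => Real.sin (π / (m:ℝ))

lemma P_ali (hm : M i j = m) : (sg M i * sg M j) (al i) =
    (4*γ^2-1) • al i + (2*γ) • al j := by
  have hsym : M j i = m := by rw [M.symmetric]; exact hm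
  rw [Module.End.mul_apply, sg_al, hsym, map_add, map_smul, sg_al_self, sg_al, hm]
  module

lemma P_alj (hm : M i j = m) : (sg M i * sg M j) (al j) =
    (-(2*γ)) • al i + (-1 : ℝ) • al j := by
  rw [Module.End.mul_apply, sg_al_self, map_neg, sg_al, hm]
  module

lemma P_pow_al (hm : M i j = m) (k : ℕ) :
    sθ • (((sg M i * sg M j)^k) (al i)) =
      Real.sin ((2*k+1)*θ) • al i + Real.sin ((2*k)*θ) • al j ∧
    sθ • (((sg M i * sg M j)^k) (al j)) =
      (-Real.sin ((2*k)*θ)) • al i + (-Real.sin ((2*k-1)*θ)) • al j := by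
  induction k with
  | zero =>
    constructor
    · rw [pow_zero]
      push_cast
      norm_num
    · rw [pow_zero]
      push_cast
      norm_num
  | succ k ih =>
    obtain ⟨ih1, ih2⟩ := ih
    have h1 : ((sg M i * sg M j)^(k+1)) (al i) = (sg M i * sg M j) (((sg M i * sg M j)^k) (al i)) := by
      rw [pow_succ']; rfl
    have h2 : ((sg M i * sg M j)^(k+1)) (al j) = (sg M i * sg M j) (((sg M i * sg M j)^k) (al j)) := by
      rw [pow_succ']; rfl
    constructor
    · rw [h1, ← map_smul, ih1, map_add, map_smul, map_smul, P_ali M hm, P_alj M hm]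
      have e1 : Real.sin ((2*(↑k+1)+1)*θ) =
          Real.sin ((2*k+1)*θ) * (4*γ^2-1) + Real.sin ((2*k)*θ) * (-(2*γ)) := by
        have ha : ((2*k:ℝ))*θ = ((2*k+1)*θ) - θ := by ring
        have hb : ((2*(↑k+1):ℝ)+1)*θ = ((2*k+1)*θ) + 2*θ := by ring
        rw [ha, hb, Real.sin_sub, Real.sin_add, Real.cos_two_mul, Real.sin_two_mul]
        ring
      have e2 : Real.sin ((2*(↑k+1):ℝ)*θ) =
          Real.sin ((2*k+1)*θ) * (2*γ) + Real.sin ((2*k)*θ) * (-1) := by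
        have ha : ((2*k:ℝ))*θ = ((2*k+1)*θ) - θ := by ring
        have hb : ((2*(↑k+1):ℝ))*θ = ((2*k+1)*θ) + θ := by ring
        rw [ha, hb, Real.sin_sub, Real.sin_add]
        ring
      push_cast
      rw [e1, e2]
      module
    · rw [h2, ← map_smul, ih2, map_add, map_smul, map_smul, P_ali M hm, P_alj M hm]
      have e1 : -Real.sin ((2*(↑k+1):ℝ)*θ) =
          (-Real.sin ((2*k)*θ)) * (4*γ^2-1) + (-Real.sin ((2*k-1)*θ)) * (-(2*γ)) := by
        have ha : ((2*k:ℝ)-1)*θ = ((2*k)*θ) - θ := by ring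
        have hb : ((2*(↑k+1):ℝ))*θ = ((2*k)*θ) + 2*θ := by ring
        rw [ha, hb, Real.sin_sub, Real.sin_add, Real.cos_two_mul, Real.sin_two_mul]
        ring
      have e2 : -Real.sin (((2*(↑k+1):ℝ)-1)*θ) =
          (-Real.sin ((2*k)*θ)) * (2*γ) + (-Real.sin ((2*k-1)*θ)) * (-1) := by
        have ha : ((2*k:ℝ)-1)*θ = ((2*k)*θ) - θ := by ring
        have hb : ((2*(↑k+1):ℝ)-1)*θ = ((2*k)*θ) + θ := by ring
        rw [ha, hb, Real.sin_sub, Real.sin_add]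
        ring
      push_cast
      rw [e1, e2]
      module

lemma sin_theta_pos (hm2 : 2 ≤ m) : 0 < sθ := by
  apply Real.sin_pos_of_pos_of_lt_pi
  · positivity
  · calc π / (m:ℝ) ≤ π / 2 := by
          apply div_le_div_of_nonneg_left pi_pos.le (by norm_num)
          exact_mod_cast hm2
      _ < π := by linarith [pi_pos]

lemma P_pow_m_ali (hm : M i j = m) (hm2 : 2 ≤ m) :
    ((sg M i * sg M j)^m) (al i) = al i := by
  have hs := sin_theta_pos (m := m) hm2
  have hm0 : (m:ℝ) ≠ 0 := by positivity
  have h := (P_pow_al M hm m).1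
  have h1 : ((2*m:ℝ)+1)*θ = θ + 2*π := by field_simp; ring
  have h2 : ((2*m:ℝ))*θ = 0 + 2*π := by field_simp; ring
  rw [h1, h2, Real.sin_add_two_pi, Real.sin_add_two_pi, Real.sin_zero] at h
  apply smul_right_injective (B →₀ ℝ) (ne_of_gt hs)
  show sθ • (((sg M i * sg M j)^m) (al i)) = sθ • al i
  rw [h]; module

lemma P_pow_m_alj (hm : M i j = m) (hm2 : 2 ≤ m) :
    ((sg M i * sg M j)^m) (al j) = al j := by
  have hs := sin_theta_pos (m := m) hm2
  have hm0 : (m:ℝ) ≠ 0 := by positivity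
  have h := (P_pow_al M hm m).2
  have h1 : ((2*m:ℝ)-1)*θ = -θ + 2*π := by field_simp; ring
  have h2 : ((2*m:ℝ))*θ = 0 + 2*π := by field_simp; ring
  rw [h1, h2, Real.sin_add_two_pi, Real.sin_add_two_pi, Real.sin_zero, Real.sin_neg] at h
  apply smul_right_injective (B →₀ ℝ) (ne_of_gt hs)
  show sθ • (((sg M i * sg M j)^m) (al j)) = sθ • al j
  rw [h]; module

lemma braid (hij : i ≠ j) (hm : M i j = m) (hm2 : 2 ≤ m) :
    (sg M i * sg M j)^m = 1 := by
  have hs := sin_theta_pos (m := m) hm2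
  have hγ : 1 - γ^2 ≠ 0 := by
    have hh : (sθ)^2 = 1 - γ^2 := Real.sin_sq _
    rw [← hh]; positivity
  have hsym : M j i = m := by rw [M.symmetric]; exact hm
  apply LinearMap.ext
  intro v
  set a : ℝ := (ph M i v + γ * ph M j v)/(1-γ^2) with ha
  set b : ℝ := (ph M j v + γ * ph M i v)/(1-γ^2) with hb
  set v₀ : B →₀ ℝ := v - a • al i - b • al j with hv₀
  have hphii := ph_al_self M i
  have hphjj := ph_al_self M j
  have hphij : ph M i (al j) = -γ := by rw [ph_al, hm]
  have hphji : ph M j (al i) = -γ := by rw [ph_al, hsym]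
  have hpi : ph M i v₀ = 0 := by
    rw [hv₀]
    simp only [map_sub, map_smul, hphii, hphij, smul_eq_mul]
    rw [ha, hb]; field_simp; ring
  have hpj : ph M j v₀ = 0 := by
    rw [hv₀]
    simp only [map_sub, map_smul, hphjj, hphji, smul_eq_mul]
    rw [ha, hb]; field_simp; ring
  have hfix : ∀ k : ℕ, ((sg M i * sg M j)^k) v₀ = v₀ := by
    intro k
    induction k with
    | zero => rw [pow_zero]; rfl
    | succ k ih =>
      have h1 : ((sg M i * sg M j)^(k+1)) v₀ = (sg M i * sg M j) (((sg M i * sg M j)^k) v₀) := by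
        rw [pow_succ']; rfl
      rw [h1, ih, Module.End.mul_apply, sg_apply M j, hpj]
      rw [show v₀ - (2*(0:ℝ)) • al j = v₀ by module, sg_apply M i, hpi]
      module
  have hdecomp : v = a • al i + b • al j + v₀ := by rw [hv₀]; module
  rw [hdecomp]
  simp only [map_add, map_smul, Module.End.one_apply]
  rw [P_pow_m_ali M hm hm2, P_pow_m_alj M hm hm2, hfix m]

end Dihedral

lemma isLiftable_sg : M.IsLiftable (sg M) := by
  intro i j
  rcases eq_or_ne i j with rfl | hij
  · rw [M.diagonal, pow_one]
    apply LinearMap.ext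
    intro v
    rw [Module.End.mul_apply, sg_apply, sg_apply, map_sub, map_smul, ph_al_self,
      Module.End.one_apply]
    simp only [smul_eq_mul, mul_one]
    module
  · rcases Nat.eq_zero_or_pos (M i j) with h0 | hpos
    · rw [h0, pow_zero]
    · have h2 : 2 ≤ M i j := by
        have := M.off_diagonal i j hij
        omega
      exact braid M hij rfl h2

section Cors

variable {W : Type*} [Group W] (cs : CoxeterSystem M W)

noncomputable def tits : W →* Module.End ℝ (B →₀ ℝ) := cs.lift ⟨sg M, isLiftable_sg M⟩

lemma tits_simple (i : B) : tits M cs (cs.simple i) = sg M i := cs.lift_apply_simple _ i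


lemma simple_injective : Function.Injective cs.simple := by
  intro i j h
  by_contra hij
  have h2 : sg M i = sg M j := by rw [← tits_simple M cs, ← tits_simple M cs, h]
  have h3 : sg M i (al i) = sg M j (al i) := by rw [h2]
  rw [sg_al_self, sg_al] at h3
  classical
  have h4 := DFunLike.congr_fun h3 i
  simp only [Finsupp.neg_apply, Finsupp.add_apply, Finsupp.smul_apply, al,
    Finsupp.single_apply, if_pos rfl, if_neg (fun hh : j = i => hij (Eq.symm hh)),
    smul_eq_mul, mul_zero, add_zero] at h4
  norm_num at h4

lemma cos_ne_zero_of_ne_two {m : ℕ} (hm1 : m ≠ 1) (hm2 : m ≠ 2) :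
    Real.cos (π / (m:ℝ)) ≠ 0 := by
  rcases Nat.eq_zero_or_pos m with h0 | hpos
  · subst h0
    norm_num
  · have h3 : 3 ≤ m := by omega
    have hpos2 : (0:ℝ) < π / (m:ℝ) := by positivity
    have hlt : π / (m:ℝ) < π / 2 := by
      apply div_lt_div_of_pos_left pi_pos (by norm_num)
      exact_mod_cast (by omega : 2 < m)
    exact ne_of_gt (Real.cos_pos_of_mem_Ioo ⟨by linarith, hlt⟩)

lemma eq_two_of_commute {i j : B} (hij : i ≠ j)
    (hc : cs.simple i * cs.simple j = cs.simple j * cs.simple i) : M i j = 2 := by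
  by_contra hm2
  have hsq : (cs.simple i * cs.simple j)^2 = 1 := by
    rw [pow_two]
    nth_rewrite 2 [hc]
    rw [show cs.simple i * cs.simple j * (cs.simple j * cs.simple i)
        = cs.simple i * (cs.simple j * (cs.simple j * cs.simple i)) by group,
      cs.simple_mul_simple_cancel_left, cs.simple_mul_simple_self]
  have hP : (sg M i * sg M j)^2 = 1 := by
    have := congrArg (tits M cs) hsq
    rw [map_pow, map_mul, tits_simple, tits_simple, map_one] at this
    exact this
  set m := M i j with hm
  have hPj := P_alj M (m := m) rfl
  have hPi := P_ali M (m := m) rfl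
  have h1 : ((sg M i * sg M j)^2) (al j) = al j := by rw [hP]; rfl
  rw [pow_two, Module.End.mul_apply, hPj, map_add, map_smul, map_smul, hPi, hPj] at h1
  classical
  have h4 := DFunLike.congr_fun h1 j
  simp only [Finsupp.add_apply, Finsupp.smul_apply, al, Finsupp.single_apply,
    if_pos rfl, if_neg (fun hh : i = j => hij hh), eq_self_iff_true, if_true] at h4
  have hγ : Real.cos (π / (m:ℝ)) ≠ 0 := by
    apply cos_ne_zero_of_ne_two
    · exact M.off_diagonal i j hij
    · exact hm2
  have hγ2 : Real.cos (π / (m:ℝ)) ^ 2 > 0 := by positivity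
  simp only [smul_eq_mul, mul_zero, mul_one, zero_add, add_zero] at h4
  nlinarith [h4]

end Cors

section Parity

variable {W : Type*} [Group W]

open Classical in
noncomputable def ind (x : W) : W → ZMod 2 := fun y => if y = x then 1 else 0

lemma ind_eq_one_iff (x y : W) : ind x y = 1 ↔ y = x := by
  classical
  unfold ind
  split
  · simp_all
  · norm_num
    assumption

lemma ind_conj (g x : W) : (fun y => ind x (g⁻¹ * y * g)) = ind (g * x * g⁻¹) := by
  classical
  funext y
  unfold ind
  congr 1
  simp only [eq_iff_iff]
  constructor
  · intro h; rw [← h]; group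
  · intro h; rw [h]; group

@[simps] def cact (g : W) : (W → ZMod 2) ≃+ (W → ZMod 2) where
  toFun n := fun y => n (g⁻¹ * y * g)
  invFun n := fun y => n (g * y * g⁻¹)
  left_inv n := by funext y; simp only []; group
  right_inv n := by funext y; simp only []; group
  map_add' n m := rfl

def actHom : W →* MulAut (Multiplicative (W → ZMod 2)) where
  toFun g := AddEquiv.toMultiplicative (cact g)
  map_one' := by
    refine MulEquiv.ext fun x => ?_
    show (cact (1:W)) x.toAdd = x.toAdd
    funext y
    simp [cact]
  map_mul' g h := by
    refine MulEquiv.ext fun x => ?_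
    show (cact (g*h)) x.toAdd = (cact g) ((cact h) x.toAdd)
    funext y
    simp only [cact_apply]
    congr 1
    group

variable (M : CoxeterMatrix B) (cs : CoxeterSystem M W)

noncomputable def fgen (i : B) : (Multiplicative (W → ZMod 2)) ⋊[actHom] W :=
  ⟨Multiplicative.ofAdd (ind (cs.simple i)), cs.simple i⟩

lemma si_pow_comm (i j : B) (l : ℕ) :
    cs.simple i * ((cs.simple i * cs.simple j)⁻¹)^l = (cs.simple i * cs.simple j)^l * cs.simple i := by
  induction l with
  | zero => simp
  | succ l ih =>
    have hbase : cs.simple i * (cs.simple i * cs.simple j)⁻¹ = (cs.simple i * cs.simple j) * cs.simple i := by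
      rw [mul_inv_rev, cs.inv_simple, cs.inv_simple]
      group
    calc cs.simple i * ((cs.simple i * cs.simple j)⁻¹)^(l+1)
        = (cs.simple i * (cs.simple i * cs.simple j)⁻¹) * ((cs.simple i * cs.simple j)⁻¹)^l := by
          rw [pow_succ', mul_assoc]
      _ = (cs.simple i * cs.simple j) * (cs.simple i * ((cs.simple i * cs.simple j)⁻¹)^l) := by
          rw [hbase]; group
      _ = (cs.simple i * cs.simple j)^(l+1) * cs.simple i := by
          rw [ih, pow_succ']; group

lemma conj_pow_si (i j : B) (l : ℕ) :
    ((cs.simple i * cs.simple j)^l) * cs.simple i * (((cs.simple i * cs.simple j)^l))⁻¹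
      = (cs.simple i * cs.simple j)^(2*l) * cs.simple i := by
  have h : cs.simple i * (((cs.simple i * cs.simple j))^l)⁻¹
      = (cs.simple i * cs.simple j)^l * cs.simple i := by
    rw [← inv_pow]
    exact si_pow_comm M cs i j l
  rw [mul_assoc, h, two_mul, pow_add]
  group

lemma actHom_ofAdd_ind (g : W) (x : W) :
    actHom g (Multiplicative.ofAdd (ind x)) = Multiplicative.ofAdd (ind (g * x * g⁻¹)) := by
  show Multiplicative.ofAdd ((cact g) (ind x)) = _
  congr 1
  rw [← ind_conj g x]
  rfl

lemma fgen_mul (i j : B) : fgen M cs i * fgen M cs j =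
    ⟨Multiplicative.ofAdd (ind (cs.simple i)
      + ind (cs.simple i * cs.simple j * cs.simple i)), cs.simple i * cs.simple j⟩ := by
  rw [fgen, fgen, SemidirectProduct.mul_def]
  congr 1
  rw [actHom_ofAdd_ind, cs.inv_simple]
  rfl

lemma fgen_pow (i j : B) (k : ℕ) : (fgen M cs i * fgen M cs j)^k =
    ⟨Multiplicative.ofAdd (∑ l ∈ Finset.range (2*k),
        ind ((cs.simple i * cs.simple j)^l * cs.simple i)),
     (cs.simple i * cs.simple j)^k⟩ := by
  induction k with
  | zero =>
    have h0 : (∑ l ∈ Finset.range (2*0), ind ((cs.simple i * cs.simple j)^l * cs.simple i))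
        = (0 : W → ZMod 2) := by simp
    rw [pow_zero, pow_zero, h0, ofAdd_zero]
    rfl
  | succ k ih =>
    rw [pow_succ, ih, fgen_mul, SemidirectProduct.mul_def]
    have h1 : (cs.simple i * cs.simple j)^k * cs.simple i * ((cs.simple i * cs.simple j)^k)⁻¹
        = (cs.simple i * cs.simple j)^(2*k) * cs.simple i := conj_pow_si M cs i j k
    have h2 : (cs.simple i * cs.simple j)^k * (cs.simple i * cs.simple j * cs.simple i) * ((cs.simple i * cs.simple j)^k)⁻¹
        = (cs.simple i * cs.simple j)^(2*k+1) * cs.simple i := by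
      have hsir : cs.simple i * ((cs.simple i * cs.simple j)^k)⁻¹
          = (cs.simple i * cs.simple j)^k * cs.simple i := by
        rw [← inv_pow]
        exact si_pow_comm M cs i j k
      calc (cs.simple i * cs.simple j)^k * (cs.simple i * cs.simple j * cs.simple i) * ((cs.simple i * cs.simple j)^k)⁻¹
          = (cs.simple i * cs.simple j)^(k+1) * (cs.simple i * ((cs.simple i * cs.simple j)^k)⁻¹) := by
            rw [pow_succ]
            group
        _ = (cs.simple i * cs.simple j)^(k+1) * ((cs.simple i * cs.simple j)^k * cs.simple i) := by
            rw [hsir]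
        _ = (cs.simple i * cs.simple j)^(2*k+1) * cs.simple i := by
            rw [show 2*k+1 = (k+1)+k by ring, pow_add]
            group
    have hsplit : Multiplicative.ofAdd (ind (cs.simple i) + ind (cs.simple i * cs.simple j * cs.simple i))
        = Multiplicative.ofAdd (ind (cs.simple i)) * Multiplicative.ofAdd (ind (cs.simple i * cs.simple j * cs.simple i)) := rfl
    show (⟨_ * actHom ((cs.simple i * cs.simple j)^k) _, _⟩ : _ ⋊[actHom] W) = _
    rw [hsplit, map_mul, actHom_ofAdd_ind, actHom_ofAdd_ind, h1, h2]
    congr 1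
    · rw [← ofAdd_add, ← ofAdd_add]
      congr 1
      rw [show 2*(k+1) = (2*k+1)+1 by ring, Finset.sum_range_succ, Finset.sum_range_succ]
      abel
    · rw [pow_succ]

lemma isLiftable_fgen : M.IsLiftable (fgen M cs) := by
  intro i j
  rcases Nat.eq_zero_or_pos (M i j) with h0 | hpos
  · rw [h0, pow_zero]
  · rw [fgen_pow]
    have hr : (cs.simple i * cs.simple j)^(M i j) = 1 := cs.simple_mul_simple_pow i j
    have hsum : (∑ l ∈ Finset.range (2*(M i j)),
        ind ((cs.simple i * cs.simple j)^l * cs.simple i)) = (0 : W → ZMod 2) := by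
      rw [two_mul, Finset.sum_range_add, ← Finset.sum_add_distrib]
      apply Finset.sum_eq_zero
      intro l _
      rw [pow_add, hr, one_mul]
      funext y
      rw [Pi.add_apply]
      exact CharTwo.add_self_eq_zero _
    rw [hsum, hr, ofAdd_zero]
    rfl

noncomputable def phiP : W →* (Multiplicative (W → ZMod 2)) ⋊[actHom] W :=
  cs.lift ⟨fgen M cs, isLiftable_fgen M cs⟩

lemma phiP_simple (i : B) : phiP M cs (cs.simple i) = fgen M cs i :=
  cs.lift_apply_simple _ i

lemma phiP_right (w : W) : (phiP M cs w).right = w := by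
  have h : (SemidirectProduct.rightHom.comp (phiP M cs)) = MonoidHom.id W := by
    apply cs.ext_simple
    intro i
    rw [MonoidHom.comp_apply, phiP_simple]
    rfl
  exact DFunLike.congr_fun h w

noncomputable def nn (w : W) : W → ZMod 2 := Multiplicative.toAdd (phiP M cs w).left

lemma nn_mul (u v : W) :
    nn M cs (u*v) = nn M cs u + fun y => nn M cs v (u⁻¹ * y * u) := by
  unfold nn
  rw [map_mul, SemidirectProduct.mul_left, phiP_right]
  rfl

lemma nn_simple (i : B) : nn M cs (cs.simple i) = ind (cs.simple i) := by
  unfold nn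
  rw [phiP_simple]
  rfl

lemma sum_ind_conj (g : W) (l : List W) :
    (fun y => ((l.map ind).sum : W → ZMod 2) (g⁻¹ * y * g))
      = ((l.map (fun x => ind (g * x * g⁻¹))).sum : W → ZMod 2) := by
  induction l with
  | nil => funext y; simp
  | cons a l ih =>
    funext y
    rw [List.map_cons, List.sum_cons, List.map_cons, List.sum_cons, Pi.add_apply, Pi.add_apply]
    congr 1
    · exact congrFun (ind_conj g a) y
    · exact congrFun ih y

lemma nn_wordProd (ω : List B) :
    nn M cs (cs.wordProd ω) = ((cs.leftInvSeq ω).map ind).sum := by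
  induction ω with
  | nil =>
    rw [cs.wordProd_nil]
    show Multiplicative.toAdd (phiP M cs 1).left = _
    rw [map_one]
    rfl
  | cons i ω ih =>
    rw [cs.wordProd_cons, nn_mul, nn_simple, ih]
    rw [show cs.leftInvSeq (i :: ω)
        = cs.simple i :: ((cs.leftInvSeq ω).map (MulAut.conj (cs.simple i))) from rfl]
    rw [List.map_cons, List.sum_cons, List.map_map]
    congr 1
    rw [sum_ind_conj (cs.simple i) (cs.leftInvSeq ω)]
    simp only [Function.comp_def, MulAut.conj_apply]

open Classical in
lemma sum_ind_eval (y : W) : ∀ {l : List W}, l.Nodup →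
    ((l.map ind).sum : W → ZMod 2) y = if y ∈ l then 1 else 0 := by
  intro l
  induction l with
  | nil => intro _; simp
  | cons a l ih =>
    intro h
    rw [List.nodup_cons] at h
    rw [List.map_cons, List.sum_cons, Pi.add_apply, ih h.2]
    by_cases hy : y = a
    · rw [hy, if_neg h.1, if_pos (List.mem_cons_self)]
      rw [show ind a a = 1 from (ind_eq_one_iff a a).mpr rfl]
      rw [add_zero]
    · have h2 : ind a y = 0 := by
        classical
        unfold ind
        rw [if_neg hy]
      rw [h2, zero_add]
      by_cases hyl : y ∈ l
      · rw [if_pos hyl, if_pos (List.mem_cons_of_mem a hyl)]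
      · rw [if_neg hyl, if_neg (by simp [hy, hyl])]

end Parity

section Main

variable {W : Type*} [Group W] (cs : CoxeterSystem M W) (T : Set B)

open Classical in
noncomputable def rhoT (heven : ∀ t ∈ T, ∀ s ∉ T, Even (M t s)) : W →* W :=
  cs.lift ⟨fun i => if i ∈ T then 1 else cs.simple i, by
    intro i j
    by_cases hi : i ∈ T <;> by_cases hj : j ∈ T <;>
      simp only [if_pos, if_neg, hi, hj, if_true, if_false]
    · rw [one_mul, one_pow]
    · rw [one_mul]
      obtain ⟨c, hc⟩ := heven i hi j hj
      rw [hc, ← two_mul, pow_mul, cs.simple_sq, one_pow]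
    · rw [mul_one]
      obtain ⟨c, hc⟩ := heven j hj i hi
      rw [M.symmetric, hc, ← two_mul, pow_mul, cs.simple_sq, one_pow]
    · exact cs.simple_mul_simple_pow i j⟩

open Classical in
noncomputable def rhoJ (heven : ∀ t ∈ T, ∀ s ∉ T, Even (M t s)) : W →* W :=
  cs.lift ⟨fun i => if i ∈ T then cs.simple i else 1, by
    intro i j
    by_cases hi : i ∈ T <;> by_cases hj : j ∈ T <;>
      simp only [if_pos, if_neg, hi, hj, if_true, if_false]
    · exact cs.simple_mul_simple_pow i j
    · rw [mul_one]
      obtain ⟨c, hc⟩ := heven i hi j hj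
      rw [hc, ← two_mul, pow_mul, cs.simple_sq, one_pow]
    · rw [one_mul]
      obtain ⟨c, hc⟩ := heven j hj i hi
      rw [M.symmetric, hc, ← two_mul, pow_mul, cs.simple_sq, one_pow]
    · rw [one_mul, one_pow]⟩

variable (heven : ∀ t ∈ T, ∀ s ∉ T, Even (M t s))

open Classical in
lemma rhoT_simple_mem {i : B} (hi : i ∈ T) : rhoT M cs T heven (cs.simple i) = 1 := by
  exact (cs.lift_apply_simple _ i).trans (if_pos hi)

open Classical in
lemma rhoT_simple_not_mem {i : B} (hi : i ∉ T) : rhoT M cs T heven (cs.simple i) = cs.simple i := by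
  exact (cs.lift_apply_simple _ i).trans (if_neg hi)

open Classical in
lemma rhoJ_simple_mem {i : B} (hi : i ∈ T) : rhoJ M cs T heven (cs.simple i) = cs.simple i := by
  exact (cs.lift_apply_simple _ i).trans (if_pos hi)

open Classical in
lemma rhoJ_simple_not_mem {i : B} (hi : i ∉ T) : rhoJ M cs T heven (cs.simple i) = 1 := by
  exact (cs.lift_apply_simple _ i).trans (if_neg hi)

lemma rhoT_fix {w : W} (hw : w ∈ Subgroup.closure (cs.simple '' Tᶜ)) :
    rhoT M cs T heven w = w := by
  induction hw using Subgroup.closure_induction with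
  | mem x hx =>
    obtain ⟨i, hi, rfl⟩ := hx
    exact rhoT_simple_not_mem M cs T heven hi
  | one => rw [map_one]
  | mul x y hx hy ihx ihy => rw [map_mul, ihx, ihy]
  | inv x hx ihx => rw [map_inv, ihx]

lemma rhoJ_kill {w : W} (hw : w ∈ Subgroup.closure (cs.simple '' Tᶜ)) :
    rhoJ M cs T heven w = 1 := by
  induction hw using Subgroup.closure_induction with
  | mem x hx =>
    obtain ⟨i, hi, rfl⟩ := hx
    exact rhoJ_simple_not_mem M cs T heven hi
  | one => rw [map_one]
  | mul x y hx hy ihx ihy => rw [map_mul, ihx, ihy, one_mul]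
  | inv x hx ihx => rw [map_inv, ihx, inv_one]

open Classical in
lemma rhoT_wordProd (ω : List B) :
    rhoT M cs T heven (cs.wordProd ω) = cs.wordProd (ω.filter fun l => decide (l ∉ T)) := by
  induction ω with
  | nil => rw [cs.wordProd_nil, map_one, List.filter_nil, cs.wordProd_nil]
  | cons i ω ih =>
    rw [cs.wordProd_cons, map_mul, ih, List.filter_cons]
    by_cases hi : i ∈ T
    · rw [rhoT_simple_mem M cs T heven hi, one_mul]
      simp only [hi, not_true, decide_not]
      norm_num
    · rw [rhoT_simple_not_mem M cs T heven hi]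
      simp only [hi, not_false_iff, decide_not]
      norm_num
      rw [cs.wordProd_cons]

include heven in
open Classical in
lemma letters_notinT {ω : List B} (hred : cs.IsReduced ω)
    (hw : cs.wordProd ω ∈ Subgroup.closure (cs.simple '' Tᶜ)) : ∀ l ∈ ω, l ∉ T := by
  have h1 : cs.wordProd (ω.filter fun l => decide (l ∉ T)) = cs.wordProd ω := by
    rw [← rhoT_wordProd M cs T heven ω]
    exact rhoT_fix M cs T heven hw
  have h2 : ω.length ≤ (ω.filter fun l => decide (l ∉ T)).length := by
    calc ω.length = cs.length (cs.wordProd ω) := hred.symm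
      _ = cs.length (cs.wordProd (ω.filter fun l => decide (l ∉ T))) := by rw [h1]
      _ ≤ (ω.filter fun l => decide (l ∉ T)).length := cs.length_wordProd_le _
  have h3 : (ω.filter fun l => decide (l ∉ T)) = ω :=
    (List.filter_sublist (l := ω)).eq_of_length (le_antisymm (List.length_filter_le _ ω) h2)
  intro l hl
  have := List.of_mem_filter (p := fun l => decide (l ∉ T)) (by rw [h3]; exact hl)
  simpa using this

lemma wordProd_mem_closure {ω : List B} (hl : ∀ l ∈ ω, l ∉ T) :
    cs.wordProd ω ∈ Subgroup.closure (cs.simple '' Tᶜ) := by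
  induction ω with
  | nil => rw [cs.wordProd_nil]; exact Subgroup.one_mem _
  | cons i ω ih =>
    rw [cs.wordProd_cons]
    exact Subgroup.mul_mem _
      (Subgroup.subset_closure ⟨i, hl i (List.mem_cons_self), rfl⟩)
      (ih (fun l hlm => hl l (List.mem_cons_of_mem i hlm)))

lemma lis_mem_closure {ω : List B} (hl : ∀ l ∈ ω, l ∉ T) :
    ∀ x ∈ cs.leftInvSeq ω, x ∈ Subgroup.closure (cs.simple '' Tᶜ) := by
  induction ω with
  | nil => intro x hx; simp [CoxeterSystem.leftInvSeq] at hx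
  | cons i ω ih =>
    intro x hx
    rw [show cs.leftInvSeq (i :: ω)
        = cs.simple i :: ((cs.leftInvSeq ω).map (MulAut.conj (cs.simple i))) from rfl] at hx
    have hsi : cs.simple i ∈ Subgroup.closure (cs.simple '' Tᶜ) :=
      Subgroup.subset_closure ⟨i, hl i (List.mem_cons_self), rfl⟩
    rcases List.mem_cons.mp hx with rfl | hx2
    · exact hsi
    · obtain ⟨y, hy, rfl⟩ := List.mem_map.mp hx2
      have hy2 := ih (fun l hlm => hl l (List.mem_cons_of_mem i hlm)) y hy
      rw [MulAut.conj_apply]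
      exact Subgroup.mul_mem _ (Subgroup.mul_mem _ hsi hy2) (Subgroup.inv_mem _ hsi)

lemma commute_simple_of_closure (t : B) {u : W}
    (hu : u ∈ Subgroup.closure (cs.simple '' {x | x ∉ T ∧ M x t = 2})) :
    u * cs.simple t = cs.simple t * u := by
  induction hu using Subgroup.closure_induction with
  | mem x hx =>
    obtain ⟨i, ⟨hiT, hi2⟩, rfl⟩ := hx
    have h1 : (cs.simple i * cs.simple t)^(M i t) = 1 := cs.simple_mul_simple_pow i t
    rw [hi2, pow_two] at h1
    have h2 : cs.simple i * cs.simple t = (cs.simple i * cs.simple t)⁻¹ := by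
      rw [eq_inv_iff_mul_eq_one]
      exact h1
    rw [h2, mul_inv_rev, cs.inv_simple, cs.inv_simple]
  | one => rw [one_mul, mul_one]
  | mul x y hx hy ihx ihy =>
    calc x * y * cs.simple t = x * (cs.simple t * y) := by rw [mul_assoc, ihy]
      _ = cs.simple t * (x * y) := by rw [← mul_assoc, ihx, mul_assoc]
  | inv x hx ihx =>
    calc x⁻¹ * cs.simple t = x⁻¹ * cs.simple t * x * x⁻¹ := by group
      _ = x⁻¹ * x * cs.simple t * x⁻¹ := by rw [mul_assoc (x⁻¹) (cs.simple t) x, ← ihx, ← mul_assoc]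
      _ = cs.simple t * x⁻¹ := by group

include heven in
lemma centralizer_lemma (t : B) (ht : t ∈ T) : ∀ (n : ℕ) (w : W), cs.length w = n →
    w ∈ Subgroup.closure (cs.simple '' Tᶜ) → w * cs.simple t * w⁻¹ = cs.simple t →
    w ∈ Subgroup.closure (cs.simple '' {x | x ∉ T ∧ M x t = 2}) := by
  intro n
  induction n using Nat.strong_induction_on with
  | _ n ih =>
    intro w hlen hw hconj
    classical
    rcases eq_or_ne w 1 with rfl | hne
    · exact Subgroup.one_mem _
    obtain ⟨ω, hred, hweq⟩ := cs.exists_reduced_word' w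
    cases ω with
    | nil =>
      exfalso
      apply hne
      rw [hweq, cs.wordProd_nil]
    | cons x ω₂ =>
      have hlet : ∀ l ∈ (x :: ω₂), l ∉ T :=
        letters_notinT M cs T heven hred (by rw [← hweq]; exact hw)
      have hx : x ∉ T := hlet x (List.mem_cons_self)
      have hc : w * cs.simple t = cs.simple t * w := by
        have h := hconj
        rw [mul_inv_eq_iff_eq_mul] at h
        rw [h]
      have hinv : ∀ y : W, nn M cs w y = nn M cs w (cs.simple t * y * cs.simple t) := by
        intro y
        have h1 : nn M cs (w * cs.simple t) = nn M cs (cs.simple t * w) := by rw [hc]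
        rw [nn_mul, nn_mul, nn_simple] at h1
        have h2 := congrFun h1 y
        rw [Pi.add_apply, Pi.add_apply] at h2
        have h3 : ind (cs.simple t) (w⁻¹ * y * w) = ind (cs.simple t) y := by
          classical
          unfold ind
          congr 1
          simp only [eq_iff_iff]
          constructor
          · intro hh
            have hy : y = w * cs.simple t * w⁻¹ := by rw [← hh]; group
            rw [hy, hconj]
          · intro hh
            rw [hh]
            calc w⁻¹ * cs.simple t * w = w⁻¹ * (w * cs.simple t * w⁻¹) * w := by rw [hconj]
              _ = cs.simple t := by group
        rw [h3, add_comm (ind (cs.simple t) y)] at h2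
        have h4 := add_right_cancel h2
        rw [h4, cs.inv_simple]
      have hnodup : (cs.leftInvSeq (x :: ω₂)).Nodup := CoxeterSystem.IsReduced.nodup_leftInvSeq cs hred
      have hval : ∀ y, nn M cs w y = if y ∈ cs.leftInvSeq (x :: ω₂) then 1 else 0 := by
        intro y
        rw [hweq, nn_wordProd]
        exact sum_ind_eval y hnodup
      have hsx_mem : cs.simple x ∈ cs.leftInvSeq (x :: ω₂) := by
        rw [show cs.leftInvSeq (x :: ω₂)
            = cs.simple x :: ((cs.leftInvSeq ω₂).map (MulAut.conj (cs.simple x))) from rfl]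
        exact List.mem_cons_self
      have hval1 : nn M cs w (cs.simple x) = 1 := by
        rw [hval, if_pos hsx_mem]
      have hval2 : nn M cs w (cs.simple t * cs.simple x * cs.simple t) = 1 := by
        rw [← hinv]
        exact hval1
      have hmem : cs.simple t * cs.simple x * cs.simple t ∈ cs.leftInvSeq (x :: ω₂) := by
        by_contra hmm
        rw [hval, if_neg hmm] at hval2
        exact zero_ne_one hval2
      have hmem2 : cs.simple t * cs.simple x * cs.simple t
          ∈ Subgroup.closure (cs.simple '' Tᶜ) := lis_mem_closure M cs T hlet _ hmem
      have heq : cs.simple t * cs.simple x * cs.simple t = cs.simple x := by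
        have hfix := rhoT_fix M cs T heven hmem2
        rw [map_mul, map_mul, rhoT_simple_mem M cs T heven ht,
          rhoT_simple_not_mem M cs T heven hx, one_mul, mul_one] at hfix
        exact hfix.symm
      have hcomm : cs.simple x * cs.simple t = cs.simple t * cs.simple x := by
        have h5 := congrArg (fun z => z * cs.simple t) heq
        rw [cs.simple_mul_simple_cancel_right] at h5
        exact h5.symm
      have hxt : x ≠ t := fun hh => hx (hh ▸ ht)
      have hM : M x t = 2 := eq_two_of_commute M cs hxt hcomm
      have hw2red : cs.IsReduced ω₂ := by
        have hd := CoxeterSystem.IsReduced.drop (cs := cs) (ω := x :: ω₂) hred 1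
        simpa using hd
      set w₂ := cs.wordProd ω₂ with hw₂
      have hsplit : w = cs.simple x * w₂ := by rw [hweq, cs.wordProd_cons]
      have hw₂mem : w₂ ∈ Subgroup.closure (cs.simple '' Tᶜ) :=
        wordProd_mem_closure M cs T (fun l hl => hlet l (List.mem_cons_of_mem x hl))
      have hlen₂ : cs.length w₂ < n := by
        have e1 : cs.length w₂ = ω₂.length := hw2red
        have e2 : n = (x :: ω₂).length := by rw [← hlen, hweq]; exact hred
        rw [e1, e2, List.length_cons]
        omega
      have hw₂w : w₂ = cs.simple x * w := by
        rw [hsplit, cs.simple_mul_simple_cancel_left]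
      have hconj₂ : w₂ * cs.simple t * w₂⁻¹ = cs.simple t := by
        rw [hw₂w, mul_inv_rev, cs.inv_simple]
        have h6 : cs.simple x * w * cs.simple t * (w⁻¹ * cs.simple x)
            = cs.simple x * (w * cs.simple t * w⁻¹) * cs.simple x := by group
        rw [h6, hconj, hcomm, cs.simple_mul_simple_cancel_right]
      have hans := ih (cs.length w₂) hlen₂ w₂ rfl hw₂mem hconj₂
      rw [hsplit]
      exact Subgroup.mul_mem _ (Subgroup.subset_closure ⟨x, ⟨hx, hM⟩, rfl⟩) hans

end Main

end EvenCox


/-- Under the evenness assumption on `T ⊆ S`, with `A_t = {s ∈ S∖T : m s t = 2}`: for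
`t₁, t₂ ∈ T` and `w₁, w₂ ∈ W_{S∖T}` we have `w₁ t₁ w₁⁻¹ = w₂ t₂ w₂⁻¹` if and only if `t₁ = t₂`
and `w₁⁻¹w₂` lies in the product set `W_{A_{t₁}} · W_{A_{t₂}}`. -/
theorem conjugate_generators_eq_iff {B W : Type*} [Group W] (M : CoxeterMatrix B)
    (cs : CoxeterSystem M W) (T : Set B)
    (heven : ∀ t ∈ T, ∀ s ∉ T, Even (M t s))
    (t₁ t₂ : B) (ht₁ : t₁ ∈ T) (ht₂ : t₂ ∈ T)
    (w₁ w₂ : W) (hw₁ : w₁ ∈ Subgroup.closure (cs.simple '' Tᶜ))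
    (hw₂ : w₂ ∈ Subgroup.closure (cs.simple '' Tᶜ)) :
    w₁ * cs.simple t₁ * w₁⁻¹ = w₂ * cs.simple t₂ * w₂⁻¹ ↔
      t₁ = t₂ ∧
      ∃ a ∈ Subgroup.closure (cs.simple '' {s | s ∉ T ∧ M s t₁ = 2}),
        ∃ b ∈ Subgroup.closure (cs.simple '' {s | s ∉ T ∧ M s t₂ = 2}),
          w₁⁻¹ * w₂ = a * b := by
  constructor
  · intro E
    have hE2 : cs.simple t₁ = cs.simple t₂ := by
      have hmap := congrArg (EvenCox.rhoJ M cs T heven) E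
      simp only [map_mul, map_inv] at hmap
      rw [EvenCox.rhoJ_kill M cs T heven hw₁, EvenCox.rhoJ_kill M cs T heven hw₂,
        EvenCox.rhoJ_simple_mem M cs T heven ht₁,
        EvenCox.rhoJ_simple_mem M cs T heven ht₂] at hmap
      simpa using hmap
    have htt : t₁ = t₂ := EvenCox.simple_injective M cs hE2
    subst htt
    refine ⟨rfl, ?_⟩
    have hwmem : w₁⁻¹ * w₂ ∈ Subgroup.closure (cs.simple '' Tᶜ) :=
      Subgroup.mul_mem _ (Subgroup.inv_mem _ hw₁) hw₂
    have hconj : (w₁⁻¹ * w₂) * cs.simple t₁ * (w₁⁻¹ * w₂)⁻¹ = cs.simple t₁ := by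
      have hE3 : w₂ * cs.simple t₁ * w₂⁻¹ = w₁ * cs.simple t₁ * w₁⁻¹ := E.symm
      calc (w₁⁻¹ * w₂) * cs.simple t₁ * (w₁⁻¹ * w₂)⁻¹
          = w₁⁻¹ * (w₂ * cs.simple t₁ * w₂⁻¹) * w₁ := by group
        _ = w₁⁻¹ * (w₁ * cs.simple t₁ * w₁⁻¹) * w₁ := by rw [hE3]
        _ = cs.simple t₁ := by group
    have hcent := EvenCox.centralizer_lemma M cs T heven t₁ ht₁
      (cs.length (w₁⁻¹ * w₂)) (w₁⁻¹ * w₂) rfl hwmem hconj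
    exact ⟨w₁⁻¹ * w₂, hcent, 1, Subgroup.one_mem _, by rw [mul_one]⟩
  · rintro ⟨rfl, a, ha, b, hb, hab⟩
    have hca := EvenCox.commute_simple_of_closure M cs T t₁ ha
    have hcb := EvenCox.commute_simple_of_closure M cs T t₁ hb
    have hw2 : w₂ = w₁ * (a * b) := by
      rw [← hab]
      group
    rw [hw2]
    have h1 : (a * b) * cs.simple t₁ * (a * b)⁻¹ = cs.simple t₁ := by
      calc (a * b) * cs.simple t₁ * (a * b)⁻¹
          = a * ((b * cs.simple t₁) * b⁻¹) * a⁻¹ := by group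
        _ = a * ((cs.simple t₁ * b) * b⁻¹) * a⁻¹ := by rw [hcb]
        _ = (a * cs.simple t₁) * a⁻¹ := by group
        _ = (cs.simple t₁ * a) * a⁻¹ := by rw [hca]
        _ = cs.simple t₁ := by group
    calc w₁ * cs.simple t₁ * w₁⁻¹
        = w₁ * ((a * b) * cs.simple t₁ * (a * b)⁻¹) * w₁⁻¹ := by rw [h1]
      _ = w₁ * (a * b) * cs.simple t₁ * (w₁ * (a * b))⁻¹ := by group
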